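/- Let G be a (2r+1)-regular multigraph with p cut-edges, let k be a positive integer, and let S, T be disjoint subsets of V(G) with R = V(G) − S − T, satisfying q(S,T) ≥ d_{G−S}(T) + 2k(|S| − |T|) + 2, where q(S,T) is the number of components Q of G−S−T with ‖V(Q),T‖ odd. Then ‖R,S‖ ≥ 3 − p + d_{G−S}(T) + 3k(|S| − |T|). -/

import Mathlib

open scoped Classical
noncomputable section

structure Multigraph (V : Type) (E : Type) where
  inc : E → Sym2 V

namespace Multigraph

variable {V E : Type}

/-- The number of times vertex `v` occurs as an endpoint of the unordered pair `s`
(a loop at `v` counts twice). -/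
def endCount (v : V) (s : Sym2 V) : ℕ :=
  Sym2.lift ⟨fun a b => (if a = v then 1 else 0) + (if b = v then 1 else 0),
    fun _ _ => add_comm _ _⟩ s

/-- The degree of a vertex in a multigraph (a loop contributes 2). -/
def degree [Fintype E] (G : Multigraph V E) (v : V) : ℕ :=
  ∑ e : E, endCount v (G.inc e)

/-- `G` has a spanning `ℓ`-regular subgraph (a set of edges giving each vertex degree `ℓ`). -/
def HasFactor [Fintype E] (G : Multigraph V E) (ℓ : ℕ) : Prop :=
  ∃ F : Finset E, ∀ v : V, ∑ e ∈ F, endCount v (G.inc e) = ℓ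

/-- One step along an edge not in `A`. -/
def Step (G : Multigraph V E) (A : Set E) (x y : V) : Prop :=
  ∃ e : E, e ∉ A ∧ G.inc e = s(x, y)

/-- The number of connected components of `G` after deleting the edges in `A`. -/
def numComponents (G : Multigraph V E) (A : Set E) : ℕ :=
  Nat.card (Quot (G.Step A))

/-- An edge is a cut-edge if deleting it increases the number of components. -/
def IsCutEdge (G : Multigraph V E) (e : E) : Prop :=
  G.numComponents ∅ < G.numComponents {e}

/-- The number of cut-edges of `G`. -/
def cutEdgeCount (G : Multigraph V E) : ℕ :=
  Nat.card {e : E // G.IsCutEdge e}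

/-- `‖A,B‖`: the number of edges with one endpoint in `A` and the other in `B`
(for disjoint `A` and `B`). -/
def edgesBetween (G : Multigraph V E) (A B : Set V) : ℕ :=
  Nat.card {e : E // ∃ a ∈ A, ∃ b ∈ B, G.inc e = s(a, b)}

/-- The degree of `v` in `G − S` (only edges with no endpoint in `S` count). -/
def degreeAvoid [Fintype E] (G : Multigraph V E) (S : Set V) (v : V) : ℕ :=
  ∑ e : E, if ∀ u ∈ S, ¬ u ∈ G.inc e then endCount v (G.inc e) else 0

/-- `d_{G−S}(T)`: the sum over `v ∈ T` of the degree of `v` in `G − S`. -/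
def degSumAvoid [Fintype V] [Fintype E] (G : Multigraph V E) (S T : Set V) : ℕ :=
  ∑ v : V, if v ∈ T then G.degreeAvoid S v else 0

/-- One step inside the vertex set `R`. -/
def StepIn (G : Multigraph V E) (R : Set V) (x y : V) : Prop :=
  x ∈ R ∧ y ∈ R ∧ ∃ e : E, G.inc e = s(x, y)

/-- Reachability within the vertex set `R`. -/
def ReachIn (G : Multigraph V E) (R : Set V) : V → V → Prop :=
  Relation.ReflTransGen (G.StepIn R)

/-- The component of `v` in the submultigraph induced by `R`. -/
def componentIn (G : Multigraph V E) (R : Set V) (v : V) : Set V :=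
  {w | G.ReachIn R v w}

/-- `C` is (the vertex set of) a component of the submultigraph induced by `R`. -/
def IsCompOf (G : Multigraph V E) (R : Set V) (C : Set V) : Prop :=
  ∃ v ∈ R, C = G.componentIn R v

/-- `q(S,T)`: the number of components `Q` of `G − S − T` with `‖V(Q),T‖` odd. -/
def oddComps (G : Multigraph V E) (S T : Set V) : ℕ :=
  Nat.card {C : Set V // G.IsCompOf ((S ∪ T)ᶜ) C ∧ Odd (G.edgesBetween C T)}

end Multigraph

-- ===================== auxiliary lemmas =====================

namespace Multigraph

variable {V E : Type}

lemma endCount_mk (v x y : V) :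
    endCount v s(x, y) = (if x = v then 1 else 0) + (if y = v then 1 else 0) := rfl

lemma one_le_endCount_right (x y : V) : 1 ≤ endCount y s(x, y) := by
  rw [endCount_mk]; simp

lemma stepIn_symm {G : Multigraph V E} {R : Set V} {x y : V}
    (h : G.StepIn R x y) : G.StepIn R y x := by
  obtain ⟨hx, hy, e, he⟩ := h
  exact ⟨hy, hx, e, by rw [he, Sym2.eq_swap]⟩

lemma reachIn_symm {G : Multigraph V E} {R : Set V} {x y : V}
    (h : G.ReachIn R x y) : G.ReachIn R y x :=
  (@Relation.ReflTransGen.symmetric _ _ ⟨fun _ _ h => stepIn_symm h⟩).symm _ _ h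

lemma componentIn_subset {G : Multigraph V E} {R : Set V} {v : V} (hv : v ∈ R) :
    G.componentIn R v ⊆ R := by
  intro w hw
  induction hw with
  | refl => exact hv
  | tail _ h _ => exact h.2.1

lemma IsCompOf.subset {G : Multigraph V E} {R C : Set V} (h : G.IsCompOf R C) : C ⊆ R := by
  obtain ⟨v, hv, rfl⟩ := h
  exact componentIn_subset hv

lemma IsCompOf.closed {G : Multigraph V E} {R C : Set V} (h : G.IsCompOf R C)
    {x y : V} {e : E} (hx : x ∈ C) (he : G.inc e = s(x, y)) (hy : y ∈ R) : y ∈ C := by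
  obtain ⟨v, hv, rfl⟩ := h
  exact Relation.ReflTransGen.tail hx ⟨componentIn_subset hv hx, hy, e, he⟩

lemma IsCompOf.eq_of_mem {G : Multigraph V E} {R C₁ C₂ : Set V} (h₁ : G.IsCompOf R C₁)
    (h₂ : G.IsCompOf R C₂) {w : V} (hw₁ : w ∈ C₁) (hw₂ : w ∈ C₂) : C₁ = C₂ := by
  obtain ⟨v₁, hv₁, rfl⟩ := h₁
  obtain ⟨v₂, hv₂, rfl⟩ := h₂
  ext u
  constructor
  · intro hu; exact hw₂.trans ((reachIn_symm hw₁).trans hu)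
  · intro hu; exact hw₁.trans ((reachIn_symm hw₂).trans hu)

lemma edgesBetween_ne_zero [Fintype E] {G : Multigraph V E} {A B : Set V} {e : E} {a b : V}
    (ha : a ∈ A) (hb : b ∈ B) (he : G.inc e = s(a, b)) :
    G.edgesBetween A B ≠ 0 := by
  have hne : Nonempty {e : E // ∃ a ∈ A, ∃ b ∈ B, G.inc e = s(a, b)} :=
    ⟨⟨e, a, ha, b, hb, he⟩⟩
  exact Nat.card_ne_zero.mpr ⟨hne, inferInstance⟩

lemma edgesBetween_eq_one_unique [Fintype E] {G : Multigraph V E} {A B : Set V}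
    (h : G.edgesBetween A B = 1) {e e' : E}
    (he : ∃ a ∈ A, ∃ b ∈ B, G.inc e = s(a, b)) (he' : ∃ a ∈ A, ∃ b ∈ B, G.inc e' = s(a, b)) :
    e = e' := by
  have hsub := (Nat.card_eq_one_iff_unique.mp h).1
  have : (⟨e, he⟩ : {e : E // ∃ a ∈ A, ∃ b ∈ B, G.inc e = s(a, b)}) = ⟨e', he'⟩ :=
    Subsingleton.elim _ _
  exact congrArg Subtype.val this

/-- If a component `C` of `R` has the property that every edge other than `e₀` incident to `C`
stays in `C`, while `e₀` joins `x₀ ∈ C` to `y₀ ∉ R`, then `e₀` is a cut-edge. -/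
lemma isCutEdge_of_pendant [Fintype V] {G : Multigraph V E} {R C : Set V}
    (hC : G.IsCompOf R C) {e₀ : E} {x₀ y₀ : V}
    (hx₀ : x₀ ∈ C) (hy₀ : y₀ ∉ R) (he₀ : G.inc e₀ = s(x₀, y₀))
    (hclosed : ∀ e : E, e ≠ e₀ → ∀ x y : V, x ∈ C → G.inc e = s(x, y) → y ∈ C) :
    G.IsCutEdge e₀ := by
  have hinv : ∀ z w : V, Relation.EqvGen (G.Step {e₀}) z w → (z ∈ C ↔ w ∈ C) := by
    intro z w h
    induction h with
    | rel a b hab =>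
      obtain ⟨e, he, hinc⟩ := hab
      have hne : e ≠ e₀ := by simpa using he
      constructor
      · intro ha; exact hclosed e hne a b ha hinc
      · intro hb; exact hclosed e hne b a hb (by rw [hinc, Sym2.eq_swap])
    | refl => exact Iff.rfl
    | symm _ _ _ ih => exact ih.symm
    | trans _ _ _ _ _ ih₁ ih₂ => exact ih₁.trans ih₂
  have hxy : Quot.mk (G.Step {e₀}) x₀ ≠ Quot.mk (G.Step {e₀}) y₀ := by
    intro h
    exact hy₀ (hC.subset ((hinv x₀ y₀ (Quot.eqvGen_exact h)).mp hx₀))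
  let φ : Quot (G.Step {e₀}) → Quot (G.Step (∅ : Set E)) :=
    Quot.map id (fun a b h => by
      obtain ⟨e, _, hinc⟩ := h
      exact ⟨e, Set.notMem_empty e, hinc⟩)
  have hsurj : Function.Surjective φ := by
    intro q
    obtain ⟨a, rfl⟩ := Quot.mk_surjective q
    exact ⟨Quot.mk _ a, rfl⟩
  have hφeq : φ (Quot.mk _ x₀) = φ (Quot.mk _ y₀) := by
    show Quot.mk _ x₀ = Quot.mk _ y₀
    exact Quot.sound ⟨e₀, Set.notMem_empty e₀, he₀⟩
  have hfin1 : Finite (Quot (G.Step {e₀})) :=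
    Finite.of_surjective (Quot.mk _) Quot.mk_surjective
  have hfin0 : Finite (Quot (G.Step (∅ : Set E))) :=
    Finite.of_surjective (Quot.mk _) Quot.mk_surjective
  have hle : Nat.card (Quot (G.Step (∅ : Set E))) ≤ Nat.card (Quot (G.Step {e₀})) :=
    Nat.card_le_card_of_surjective φ hsurj
  rcases lt_or_eq_of_le hle with h | h
  · exact h
  · exfalso
    have hbij : Function.Bijective φ :=
      (Nat.bijective_iff_surjective_and_card φ).mpr ⟨hsurj, h.symm⟩
    exact hxy (hbij.1 hφeq)

end Multigraph

open Multigraph in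
/-- If a `(2r+1)`-regular multigraph `G` with `p` cut-edges and disjoint `S, T ⊆ V(G)`,
`R = V(G) − S − T`, satisfy `q(S,T) ≥ d_{G−S}(T) + 2k(|S| − |T|) + 2`, then
`‖R,S‖ ≥ 3 − p + d_{G−S}(T) + 3k(|S| − |T|)`. -/
theorem edgesBetween_R_S_lower_bound
    {V E : Type} [Fintype V] [Fintype E] (r k : ℕ) (hk : 0 < k)
    (G : Multigraph V E) (hreg : ∀ v : V, G.degree v = 2 * r + 1)
    (S T : Set V) (hST : Disjoint S T)
    (hineq : (G.degSumAvoid S T : ℤ) + (2 * k : ℤ) * ((S.ncard : ℤ) - (T.ncard : ℤ)) + 2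
      ≤ (G.oddComps S T : ℤ)) :
    (3 : ℤ) - (G.cutEdgeCount : ℤ) + (G.degSumAvoid S T : ℤ)
        + (3 * k : ℤ) * ((S.ncard : ℤ) - (T.ncard : ℤ))
      ≤ (G.edgesBetween ((S ∪ T)ᶜ) S : ℤ) := by
  classical
  rcases isEmpty_or_nonempty E with hE | hE
  · -- no edges at all
    have hd0 : G.degSumAvoid S T = 0 := by
      unfold degSumAvoid degreeAvoid; simp
    have hq0 : G.oddComps S T = 0 := by
      unfold oddComps
      rw [Nat.card_eq_zero]
      left
      refine ⟨fun C => ?_⟩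
      have h0 : G.edgesBetween C.1 T = 0 := Nat.card_eq_zero.mpr (Or.inl inferInstance)
      have hodd := C.2.2
      rw [h0] at hodd
      simp at hodd
    have hp0 : G.cutEdgeCount = 0 := Nat.card_eq_zero.mpr (Or.inl inferInstance)
    rw [hd0, hq0] at hineq
    rw [hd0, hp0]
    have hnn : (0 : ℤ) ≤ (G.edgesBetween ((S ∪ T)ᶜ) S : ℤ) := Int.natCast_nonneg _
    have e2 : (2 * k : ℤ) * ((S.ncard : ℤ) - (T.ncard : ℤ))
        = 2 * ((k : ℤ) * ((S.ncard : ℤ) - (T.ncard : ℤ))) := by ring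
    have e3 : (3 * k : ℤ) * ((S.ncard : ℤ) - (T.ncard : ℤ))
        = 3 * ((k : ℤ) * ((S.ncard : ℤ) - (T.ncard : ℤ))) := by ring
    rw [e2] at hineq
    rw [e3]
    push_cast at hineq ⊢
    linarith
  set R : Set V := (S ∪ T)ᶜ with hR
  have hSnotR : ∀ z ∈ S, z ∉ R := fun z hz hzR => hzR (Or.inl hz)
  have hTnotR : ∀ z ∈ T, z ∉ R := fun z hz hzR => hzR (Or.inr hz)
  have hRnotS : ∀ z ∈ R, z ∉ S := fun z hz hzS => hz (Or.inl hzS)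
  set P : Set V → Prop := fun C => G.IsCompOf R C ∧ Odd (G.edgesBetween C T) with hP
  -- an edge between a component and a set outside R determines the component
  have hdet : ∀ {C₁ C₂ : Set V}, G.IsCompOf R C₁ → G.IsCompOf R C₂ →
      ∀ {W : Set V}, (∀ z ∈ W, z ∉ R) → ∀ {e : E},
      (∃ x ∈ C₁, ∃ y ∈ W, G.inc e = s(x, y)) → (∃ x ∈ C₂, ∃ y ∈ W, G.inc e = s(x, y)) →
      C₁ = C₂ := by
    intro C₁ C₂ h₁ h₂ W hW e he₁ he₂
    obtain ⟨x₁, hx₁, y₁, hy₁, hi₁⟩ := he₁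
    obtain ⟨x₂, hx₂, y₂, hy₂, hi₂⟩ := he₂
    rw [hi₁, Sym2.eq_iff] at hi₂
    rcases hi₂ with ⟨hxx, _⟩ | ⟨hxy, _⟩
    · subst hxx; exact h₁.eq_of_mem h₂ hx₁ hx₂
    · subst hxy; exact absurd (h₁.subset hx₁) (hW _ hy₂)
  -- choice of an edge to S for components having one
  have hAe : ∀ C : Set V, (P C ∧ 1 ≤ G.edgesBetween C S) →
      ∃ e : E, ∃ x ∈ C, ∃ y ∈ S, G.inc e = s(x, y) := by
    intro C hC
    have hpos : 0 < Nat.card {e : E // ∃ a ∈ C, ∃ b ∈ S, G.inc e = s(a, b)} := hC.2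
    obtain ⟨⟨⟨e, he⟩⟩, -⟩ := Nat.card_pos_iff.mp hpos
    exact ⟨e, he⟩
  choose! eS heS using hAe
  -- choice of an edge to T for any odd component
  have hPTe : ∀ C : Set V, P C → ∃ e : E, ∃ x ∈ C, ∃ y ∈ T, G.inc e = s(x, y) := by
    intro C hC
    have h0 : G.edgesBetween C T ≠ 0 := by
      intro h0; have hodd := hC.2; rw [h0] at hodd; simp at hodd
    have hpos : 0 < Nat.card {e : E // ∃ a ∈ C, ∃ b ∈ T, G.inc e = s(a, b)} :=
      Nat.pos_of_ne_zero h0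
    obtain ⟨⟨⟨e, he⟩⟩, -⟩ := Nat.card_pos_iff.mp hpos
    exact ⟨e, he⟩
  choose! eT heT using hPTe
  -- pendant components give cut-edges
  have hcut : ∀ C : Set V, P C → G.edgesBetween C S = 0 → G.edgesBetween C T = 1 →
      G.IsCutEdge (eT C) := by
    intro C hC hS0 hT1
    obtain ⟨x, hx, y, hy, hxy⟩ := heT C hC
    refine isCutEdge_of_pendant hC.1 hx (hTnotR y hy) hxy ?_
    intro e hne xx yy hxx hinc
    by_cases hyyR : yy ∈ R
    · exact hC.1.closed hxx hinc hyyR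
    · have hmem : yy ∈ S ∪ T := by
        by_contra hc; exact hyyR hc
      rcases hmem with hyS | hyT
      · exact absurd hS0 (edgesBetween_ne_zero hxx hyS hinc)
      · exact absurd (edgesBetween_eq_one_unique hT1
          ⟨x, hx, y, hy, hxy⟩ ⟨xx, hxx, yy, hyT, hinc⟩) (Ne.symm hne)
  -- the three classes of odd components
  have hq : G.oddComps S T ≤
      Nat.card {C : Set V // P C ∧ 1 ≤ G.edgesBetween C S}
      + Nat.card {C : Set V // P C ∧ G.edgesBetween C S = 0 ∧ G.edgesBetween C T = 1}
      + Nat.card {C : Set V // P C ∧ G.edgesBetween C S = 0 ∧ 3 ≤ G.edgesBetween C T} := by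
    have hf : Function.Injective (fun C : {C : Set V // P C} =>
        (if h1 : 1 ≤ G.edgesBetween C.1 S then
          Sum.inl ⟨C.1, C.2, h1⟩
        else if h2 : G.edgesBetween C.1 T = 1 then
          Sum.inr (Sum.inl ⟨C.1, C.2, by omega, h2⟩)
        else
          Sum.inr (Sum.inr ⟨C.1, C.2, by omega, by
            obtain ⟨m, hm⟩ := C.2.2; omega⟩) :
        {C : Set V // P C ∧ 1 ≤ G.edgesBetween C S}
        ⊕ {C : Set V // P C ∧ G.edgesBetween C S = 0 ∧ G.edgesBetween C T = 1}
        ⊕ {C : Set V // P C ∧ G.edgesBetween C S = 0 ∧ 3 ≤ G.edgesBetween C T})) := by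
      intro C₁ C₂ h
      apply Subtype.ext
      dsimp only at h
      split_ifs at h <;>
        simp only [Sum.inl.injEq, Sum.inr.injEq, Subtype.mk.injEq, reduceCtorEq] at h <;>
        first | exact h | exact h.elim
    have h1 : G.oddComps S T = Nat.card {C : Set V // P C} := rfl
    rw [h1]
    calc Nat.card {C : Set V // P C} ≤ _ := Nat.card_le_card_of_injective _ hf
      _ = _ := by rw [Nat.card_sum, Nat.card_sum]; ring
  -- a ≤ ‖R,S‖
  have hm : Nat.card {C : Set V // P C ∧ 1 ≤ G.edgesBetween C S} ≤ G.edgesBetween R S := by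
    have hmem : ∀ C : {C : Set V // P C ∧ 1 ≤ G.edgesBetween C S},
        ∃ a ∈ R, ∃ b ∈ S, G.inc (eS C.1) = s(a, b) := by
      intro C
      obtain ⟨x, hx, y, hy, he⟩ := heS C.1 C.2
      exact ⟨x, C.2.1.1.subset hx, y, hy, he⟩
    have hf : Function.Injective (fun C : {C : Set V // P C ∧ 1 ≤ G.edgesBetween C S} =>
        (⟨eS C.1, hmem C⟩ : {e : E // ∃ a ∈ R, ∃ b ∈ S, G.inc e = s(a, b)})) := by
      intro C₁ C₂ h
      have he : eS C₁.1 = eS C₂.1 := congrArg Subtype.val h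
      apply Subtype.ext
      obtain ⟨x₁, hx₁, y₁, hy₁, h₁⟩ := heS C₁.1 C₁.2
      obtain ⟨x₂, hx₂, y₂, hy₂, h₂⟩ := heS C₂.1 C₂.2
      rw [← he] at h₂
      exact hdet C₁.2.1.1 C₂.2.1.1 hSnotR ⟨x₁, hx₁, y₁, hy₁, h₁⟩ ⟨x₂, hx₂, y₂, hy₂, h₂⟩
    exact Nat.card_le_card_of_injective _ hf
  -- b ≤ p
  have hb : Nat.card {C : Set V // P C ∧ G.edgesBetween C S = 0 ∧ G.edgesBetween C T = 1}
      ≤ G.cutEdgeCount := by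
    have hf : Function.Injective
        (fun C : {C : Set V // P C ∧ G.edgesBetween C S = 0 ∧ G.edgesBetween C T = 1} =>
        (⟨eT C.1, hcut C.1 C.2.1 C.2.2.1 C.2.2.2⟩ : {e : E // G.IsCutEdge e})) := by
      intro C₁ C₂ h
      have he : eT C₁.1 = eT C₂.1 := congrArg Subtype.val h
      apply Subtype.ext
      obtain ⟨x₁, hx₁, y₁, hy₁, h₁⟩ := heT C₁.1 C₁.2.1
      obtain ⟨x₂, hx₂, y₂, hy₂, h₂⟩ := heT C₂.1 C₂.2.1
      rw [← he] at h₂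
      exact hdet C₁.2.1.1 C₂.2.1.1 hTnotR ⟨x₁, hx₁, y₁, hy₁, h₁⟩ ⟨x₂, hx₂, y₂, hy₂, h₂⟩
    exact Nat.card_le_card_of_injective _ hf
  -- edges from odd components to T
  set Q : E → Prop := fun e => ∃ C : Set V, P C ∧ ∃ x ∈ C, ∃ y ∈ T, G.inc e = s(x, y) with hQdef
  have hd1 : Nat.card {e : E // Q e} ≤ G.degSumAvoid S T := by
    have h1 : G.degSumAvoid S T = ∑ e : E, ∑ v : V,
        (if v ∈ T then (if (∀ u ∈ S, ¬ u ∈ G.inc e) then endCount v (G.inc e) else 0)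
          else 0) := by
      unfold degSumAvoid degreeAvoid
      rw [← Finset.sum_comm]
      refine Finset.sum_congr rfl fun v _ => ?_
      by_cases hv : v ∈ T
      · rw [if_pos hv]
        exact Finset.sum_congr rfl fun e _ => by split_ifs <;> rfl
      · simp [hv]
    have h2 : Nat.card {e : E // Q e} = ∑ e : E, (if Q e then 1 else 0) := by
      rw [Nat.card_eq_fintype_card, Fintype.card_subtype, Finset.card_filter]
    rw [h1, h2]
    refine Finset.sum_le_sum fun e _ => ?_
    by_cases hQ : Q e
    · rw [if_pos hQ]
      obtain ⟨C, hC, x, hx, y, hy, he⟩ := hQ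
      have havoid : ∀ u ∈ S, ¬ u ∈ G.inc e := by
        intro u hu hmem
        rw [he] at hmem
        rcases Sym2.mem_iff.mp hmem with rfl | rfl
        · exact hRnotS u (hC.1.subset hx) hu
        · exact (Set.disjoint_left.mp hST hu) hy
      calc 1 ≤ (if y ∈ T then (if (∀ u ∈ S, ¬ u ∈ G.inc e) then endCount y (G.inc e) else 0)
              else 0) := by
            rw [if_pos hy, if_pos havoid, he]; exact one_le_endCount_right x y
        _ ≤ ∑ v : V, (if v ∈ T then (if (∀ u ∈ S, ¬ u ∈ G.inc e) then endCount v (G.inc e)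
              else 0) else 0) :=
            Finset.single_le_sum (f := fun v => if v ∈ T then
                (if (∀ u ∈ S, ¬ u ∈ G.inc e) then endCount v (G.inc e) else 0) else 0)
              (fun i _ => Nat.zero_le _) (Finset.mem_univ y)
    · rw [if_neg hQ]; exact Nat.zero_le _
  -- a + b + 3c ≤ number of such edges
  have h3 : ∀ C : {C : Set V // P C ∧ G.edgesBetween C S = 0 ∧ 3 ≤ G.edgesBetween C T},
      ∃ f : Fin 3 → E, Function.Injective f ∧
        ∀ i, ∃ x ∈ C.1, ∃ y ∈ T, G.inc (f i) = s(x, y) := by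
    rintro ⟨C, hC⟩
    have hcard : 3 ≤ Fintype.card {e : E // ∃ a ∈ C, ∃ b ∈ T, G.inc e = s(a, b)} := by
      rw [← Nat.card_eq_fintype_card]; exact hC.2.2
    obtain ⟨t, -, ht3⟩ := Finset.exists_subset_card_eq
      (s := (Finset.univ : Finset {e : E // ∃ a ∈ C, ∃ b ∈ T, G.inc e = s(a, b)}))
      (by simpa using hcard)
    obtain ⟨a, b, c, hab, hac, hbc, rfl⟩ := Finset.card_eq_three.mp ht3
    have hab' : a.1 ≠ b.1 := fun h => hab (Subtype.ext h)
    have hac' : a.1 ≠ c.1 := fun h => hac (Subtype.ext h)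
    have hbc' : b.1 ≠ c.1 := fun h => hbc (Subtype.ext h)
    have hnd : ([a.1, b.1, c.1] : List E).Nodup := by
      simp [hab', hac', hbc']
    refine ⟨([a.1, b.1, c.1] : List E).get, List.nodup_iff_injective_get.mp hnd, ?_⟩
    intro i
    fin_cases i
    · exact a.2
    · exact b.2
    · exact c.2
  choose f3 hf3inj hf3 using h3
  have hd2 : Nat.card {C : Set V // P C ∧ 1 ≤ G.edgesBetween C S}
      + Nat.card {C : Set V // P C ∧ G.edgesBetween C S = 0 ∧ G.edgesBetween C T = 1}
      + 3 * Nat.card {C : Set V // P C ∧ G.edgesBetween C S = 0 ∧ 3 ≤ G.edgesBetween C T}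
      ≤ Nat.card {e : E // Q e} := by
    have hedge : ∀ {C₁ C₂ : Set V}, P C₁ → P C₂ → ∀ {e : E},
        (∃ x ∈ C₁, ∃ y ∈ T, G.inc e = s(x, y)) → (∃ x ∈ C₂, ∃ y ∈ T, G.inc e = s(x, y)) →
        C₁ = C₂ := fun h₁ h₂ => hdet h₁.1 h₂.1 hTnotR
    let F : {C : Set V // P C ∧ 1 ≤ G.edgesBetween C S}
        ⊕ {C : Set V // P C ∧ G.edgesBetween C S = 0 ∧ G.edgesBetween C T = 1}
        ⊕ {C : Set V // P C ∧ G.edgesBetween C S = 0 ∧ 3 ≤ G.edgesBetween C T} × Fin 3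
        → {e : E // Q e} := fun z =>
      match z with
      | Sum.inl C => ⟨eT C.1, C.1, C.2.1, heT C.1 C.2.1⟩
      | Sum.inr (Sum.inl C) => ⟨eT C.1, C.1, C.2.1, heT C.1 C.2.1⟩
      | Sum.inr (Sum.inr (C, i)) => ⟨f3 C i, C.1, C.2.1, hf3 C i⟩
    have hFinj : Function.Injective F := by
      rintro (C₁ | C₁ | ⟨C₁, i₁⟩) (C₂ | C₂ | ⟨C₂, i₂⟩) h <;>
        have h' := congrArg Subtype.val h <;>
        simp only [F] at h'
      · -- A A
        have hC : C₁.1 = C₂.1 :=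
          hedge C₁.2.1 C₂.2.1 (heT C₁.1 C₁.2.1) (h' ▸ heT C₂.1 C₂.2.1)
        exact congrArg Sum.inl (Subtype.ext hC)
      · -- A B
        exfalso
        have hC : C₁.1 = C₂.1 :=
          hedge C₁.2.1 C₂.2.1 (heT C₁.1 C₁.2.1) (h' ▸ heT C₂.1 C₂.2.1)
        have := C₁.2.2
        rw [hC, C₂.2.2.1] at this
        omega
      · -- A Cc
        exfalso
        have hC : C₁.1 = C₂.1 :=
          hedge C₁.2.1 C₂.2.1 (heT C₁.1 C₁.2.1) (h' ▸ hf3 C₂ i₂)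
        have := C₁.2.2
        rw [hC, C₂.2.2.1] at this
        omega
      · -- B A
        exfalso
        have hC : C₁.1 = C₂.1 :=
          hedge C₁.2.1 C₂.2.1 (heT C₁.1 C₁.2.1) (h' ▸ heT C₂.1 C₂.2.1)
        have := C₂.2.2
        rw [← hC, C₁.2.2.1] at this
        omega
      · -- B B
        have hC : C₁.1 = C₂.1 :=
          hedge C₁.2.1 C₂.2.1 (heT C₁.1 C₁.2.1) (h' ▸ heT C₂.1 C₂.2.1)
        exact congrArg (Sum.inr ∘ Sum.inl) (Subtype.ext hC)
      · -- B Cc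
        exfalso
        have hC : C₁.1 = C₂.1 :=
          hedge C₁.2.1 C₂.2.1 (heT C₁.1 C₁.2.1) (h' ▸ hf3 C₂ i₂)
        have h1 := C₁.2.2.2
        have h3' := C₂.2.2.2
        rw [← hC] at h3'
        omega
      · -- Cc A
        exfalso
        have hC : C₁.1 = C₂.1 :=
          hedge C₁.2.1 C₂.2.1 (hf3 C₁ i₁) (h' ▸ heT C₂.1 C₂.2.1)
        have := C₂.2.2
        rw [← hC, C₁.2.2.1] at this
        omega
      · -- Cc B
        exfalso
        have hC : C₁.1 = C₂.1 :=
          hedge C₁.2.1 C₂.2.1 (hf3 C₁ i₁) (h' ▸ heT C₂.1 C₂.2.1)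
        have h1 := C₂.2.2.2
        have h3' := C₁.2.2.2
        rw [hC] at h3'
        omega
      · -- Cc Cc
        have hC : C₁.1 = C₂.1 :=
          hedge C₁.2.1 C₂.2.1 (hf3 C₁ i₁) (h' ▸ hf3 C₂ i₂)
        have hCC : C₁ = C₂ := Subtype.ext hC
        subst hCC
        have hi : i₁ = i₂ := hf3inj C₁ h'
        rw [hi]
    have hcard := Nat.card_le_card_of_injective F hFinj
    rw [Nat.card_sum, Nat.card_sum, Nat.card_prod, Nat.card_eq_fintype_card (α := Fin 3),
      Fintype.card_fin] at hcard
    omega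
  -- final arithmetic
  have hd : (Nat.card {C : Set V // P C ∧ 1 ≤ G.edgesBetween C S} : ℤ)
      + Nat.card {C : Set V // P C ∧ G.edgesBetween C S = 0 ∧ G.edgesBetween C T = 1}
      + 3 * Nat.card {C : Set V // P C ∧ G.edgesBetween C S = 0 ∧ 3 ≤ G.edgesBetween C T}
      ≤ (G.degSumAvoid S T : ℤ) := by exact_mod_cast hd2.trans hd1
  have hq' : (G.oddComps S T : ℤ) ≤
      (Nat.card {C : Set V // P C ∧ 1 ≤ G.edgesBetween C S} : ℤ)
      + Nat.card {C : Set V // P C ∧ G.edgesBetween C S = 0 ∧ G.edgesBetween C T = 1}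
      + Nat.card {C : Set V // P C ∧ G.edgesBetween C S = 0 ∧ 3 ≤ G.edgesBetween C T} := by
    exact_mod_cast hq
  have hm' : (Nat.card {C : Set V // P C ∧ 1 ≤ G.edgesBetween C S} : ℤ)
      ≤ (G.edgesBetween R S : ℤ) := by exact_mod_cast hm
  have hb' : (Nat.card {C : Set V // P C ∧ G.edgesBetween C S = 0 ∧ G.edgesBetween C T = 1} : ℤ)
      ≤ (G.cutEdgeCount : ℤ) := by exact_mod_cast hb
  have e2 : (2 * k : ℤ) * ((S.ncard : ℤ) - (T.ncard : ℤ))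
      = 2 * ((k : ℤ) * ((S.ncard : ℤ) - (T.ncard : ℤ))) := by ring
  have e3 : (3 * k : ℤ) * ((S.ncard : ℤ) - (T.ncard : ℤ))
      = 3 * ((k : ℤ) * ((S.ncard : ℤ) - (T.ncard : ℤ))) := by ring
  rw [e3]
  rw [e2] at hineq
  linarith
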